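/- Let T1, T2 be q-commuting contractions with product T = T1T2. If T is unitary, then both T1 and T2 are unitary. -/

import Mathlib

open ContinuousLinearMap

/-- If `T1, T2` are `q`-commuting contractions whose product `T = T1 T2` is unitary,
then both `T1` and `T2` are unitary. -/
theorem unitary_of_product_unitary
    {H : Type*} [NormedAddCommGroup H] [InnerProductSpace ℂ H] [CompleteSpace H]
    (q : ℂ) (hq : ‖q‖ = 1)
    (T1 T2 : H →L[ℂ] H) (hT1 : ‖T1‖ ≤ 1) (hT2 : ‖T2‖ ≤ 1)
    (hcomm : T1 * T2 = q • (T2 * T1))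
    (hU1 : adjoint (T1 * T2) * (T1 * T2) = 1)
    (hU2 : (T1 * T2) * adjoint (T1 * T2) = 1) :
    (adjoint T1 * T1 = 1 ∧ T1 * adjoint T1 = 1) ∧
    (adjoint T2 * T2 = 1 ∧ T2 * adjoint T2 = 1) := by
  have hqne : q ≠ 0 := by
    intro h; rw [h, norm_zero] at hq; norm_num at hq
  -- T1 T2 is an isometry
  have hiso : ∀ x, ‖(T1 * T2) x‖ = ‖x‖ :=
    (norm_map_iff_adjoint_comp_self (T1 * T2)).mpr hU1
  -- T2 T1 is an isometry
  have hiso' : ∀ x, ‖(T2 * T1) x‖ = ‖x‖ := by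
    intro x
    have : ‖(T1 * T2) x‖ = ‖q‖ * ‖(T2 * T1) x‖ := by
      rw [hcomm]; simp [norm_smul]
    rw [hiso x, hq, one_mul] at this
    exact this.symm
  -- T2 is an isometry
  have h2 : ∀ x, ‖T2 x‖ = ‖x‖ := by
    intro x
    refine le_antisymm (by simpa using T2.le_of_opNorm_le hT2 x) ?_
    calc ‖x‖ = ‖T1 (T2 x)‖ := (hiso x).symm
      _ ≤ ‖T1‖ * ‖T2 x‖ := T1.le_opNorm _
      _ ≤ 1 * ‖T2 x‖ := by gcongr
      _ = ‖T2 x‖ := one_mul _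
  -- T1 is an isometry
  have h1 : ∀ x, ‖T1 x‖ = ‖x‖ := by
    intro x
    refine le_antisymm (by simpa using T1.le_of_opNorm_le hT1 x) ?_
    calc ‖x‖ = ‖T2 (T1 x)‖ := (hiso' x).symm
      _ ≤ ‖T2‖ * ‖T1 x‖ := T2.le_opNorm _
      _ ≤ 1 * ‖T1 x‖ := by gcongr
      _ = ‖T1 x‖ := one_mul _
  have hs1 : adjoint T1 * T1 = 1 := (norm_map_iff_adjoint_comp_self T1).mp h1
  have hs2 : adjoint T2 * T2 = 1 := (norm_map_iff_adjoint_comp_self T2).mp h2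
  -- surjectivity of T1 T2
  have hsurj : ∀ y : H, (T1 * T2) (adjoint (T1 * T2) y) = y := by
    intro y
    have := congrArg (fun S => S y) hU2
    simpa using this
  have hsurj1 : Function.Surjective T1 := fun y =>
    ⟨T2 (adjoint (T1 * T2) y), hsurj y⟩
  have hsurj2 : Function.Surjective T2 := by
    intro y
    refine ⟨q • T1 (adjoint (T1 * T2) y), ?_⟩
    have h := congrArg (fun S => S (adjoint (T1 * T2) y)) hcomm
    simp only [ContinuousLinearMap.mul_apply, smul_apply] at h
    have h' : T1 (T2 ((adjoint (T1 * T2)) y)) = y := by simpa using hsurj y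
    rw [map_smul, ← h, h']
  have hco1 : T1 * adjoint T1 = 1 := by
    ext y
    obtain ⟨x, rfl⟩ := hsurj1 y
    have := congrArg (fun S => T1 (S x)) hs1
    simpa using this
  have hco2 : T2 * adjoint T2 = 1 := by
    ext y
    obtain ⟨x, rfl⟩ := hsurj2 y
    have := congrArg (fun S => T2 (S x)) hs2
    simpa using this
  exact ⟨⟨hs1, hco1⟩, ⟨hs2, hco2⟩⟩
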